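/- Dingle–Paris–Olver special case: for fixed complex a, b and every nonnegative integer M, Γ(a+n)Γ(b+n)/(Γ(1+n)Γ(a+b-1+n)) = 1 + Σ_{m=1}^{M} (1-a)_m (1-b)_m / (m! (2-a-b-n)_m) + O(n^{-M-1}) as n → ∞ through positive integers. -/

import Mathlib

open Complex Polynomial Filter Asymptotics Topology

noncomputable def poch (x : ℂ) (m : ℕ) : ℂ := (ascPochhammer ℂ m).eval x

lemma poch_zero (x : ℂ) : poch x 0 = 1 := by simp [poch]

lemma poch_succ (x : ℂ) (m : ℕ) : poch x (m+1) = poch x m * (x + m) := by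
  simp [poch, ascPochhammer_succ_eval]

lemma poch_succ_left (x : ℂ) (m : ℕ) : poch x (m+1) = x * poch (x+1) m := by
  simp [poch, ascPochhammer_succ_left, eval_comp]

lemma poch_ne_zero {x : ℂ} {m : ℕ} (h : ∀ j < m, x + j ≠ 0) : poch x m ≠ 0 := by
  induction m with
  | zero => simp [poch_zero]
  | succ k ih =>
    rw [poch_succ]
    exact mul_ne_zero (ih fun j hj => h j (by omega)) (h k (by omega))

noncomputable def tt (a b x : ℂ) (m : ℕ) : ℂ :=
  poch (1 - a) m * poch (1 - b) m / ((m.factorial : ℂ) * poch (2 - a - b - x) m)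

noncomputable def ww (a b x : ℂ) (m : ℕ) : ℂ :=
  ((m : ℂ) * poch (1 - a) m * poch (1 - b) m) / ((m.factorial : ℂ) * poch (2 - a - b - x) (m - 1))

noncomputable def gg (a b : ℂ) (M : ℕ) (x : ℂ) : ℂ := ∑ m ∈ Finset.range (M + 1), tt a b x m

set_option maxHeartbeats 2000000 in
lemma step_term (a b x : ℂ) (m : ℕ) (h0 : 1 - a - b - x ≠ 0)
    (h : ∀ j : ℕ, j < m → 2 - a - b - x + (j:ℂ) ≠ 0) :
    (a + x) * (b + x) * tt a b x m - (1 + x) * (a + b - 1 + x) * tt a b (x + 1) m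
      = ww a b x (m + 1) - ww a b x m := by
  cases m with
  | zero =>
    simp only [tt, ww, poch_zero, Nat.factorial_zero, Nat.factorial_one, Nat.cast_one,
      Nat.cast_zero, zero_mul, zero_div, sub_zero, mul_one, one_mul, div_one]
    rw [show (1:ℕ) - 1 = 0 from rfl, poch_zero, poch_succ, poch_succ, poch_zero, poch_zero]
    push_cast
    norm_num
    ring
  | succ k =>
    obtain ⟨y, hy⟩ : ∃ y, y = 2 - a - b - x := ⟨_, rfl⟩
    have hx : x = 2 - a - b - y := by rw [hy]; ring
    subst hx
    have h0' : y - 1 ≠ 0 := by intro hc; apply h0; linear_combination hc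
    have hyk' : y + (k:ℂ) ≠ 0 := by
      intro hc; apply h (k) (by omega); linear_combination hc
    have hQ : poch y k ≠ 0 := by
      refine poch_ne_zero fun j hj => ?_
      intro hc; apply h j (by omega); linear_combination hc
    have hF : ((k+1).factorial : ℂ) ≠ 0 := Nat.cast_ne_zero.mpr (Nat.factorial_ne_zero _)
    have hk2 : ((k:ℂ)+1+1) ≠ 0 := by exact_mod_cast (by omega : (k+2:ℕ) ≠ 0)
    have e0 : 2 - a - b - (2 - a - b - y) = y := by ring
    have e1 : 2 - a - b - (2 - a - b - y + 1) = y - 1 := by ring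
    have e2 : y - 1 + 1 = y := by ring
    simp only [tt, ww, Nat.add_sub_cancel, e0, e1]
    rw [poch_succ y k, poch_succ_left (y-1) k, e2]
    rw [poch_succ (1-a) (k+1), poch_succ (1-b) (k+1)]
    rw [Nat.factorial_succ (k+1)]
    set A := poch (1-a) (k+1)
    set B := poch (1-b) (k+1)
    set Q := poch y k
    push_cast
    field_simp
    ring

lemma step_sum (a b x : ℂ) (M : ℕ) (h0 : 1 - a - b - x ≠ 0)
    (h : ∀ j : ℕ, j < M + 1 → 2 - a - b - x + (j:ℂ) ≠ 0) :
    (a + x) * (b + x) * gg a b M x - (1 + x) * (a + b - 1 + x) * gg a b M (x + 1)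
      = ww a b x (M + 1) := by
  have : (a + x) * (b + x) * gg a b M x - (1 + x) * (a + b - 1 + x) * gg a b M (x + 1)
      = ∑ m ∈ Finset.range (M+1), (ww a b x (m+1) - ww a b x m) := by
    rw [gg, gg, Finset.mul_sum, Finset.mul_sum, ← Finset.sum_sub_distrib]
    refine Finset.sum_congr rfl fun m hm => ?_
    exact step_term a b x m h0 fun j hj => h j (by
      simp only [Finset.mem_range] at hm; omega)
  rw [this, Finset.sum_range_sub (ww a b x)]
  simp [ww]

noncomputable def ff (a b : ℂ) (n : ℕ) : ℂ :=
  Complex.Gamma (a + n) * Complex.Gamma (b + n) /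
    (Complex.Gamma (1 + n) * Complex.Gamma (a + b - 1 + n))

lemma ff_rec (a b : ℂ) (n : ℕ) (ha : a + (n:ℂ) ≠ 0) (hb : b + (n:ℂ) ≠ 0)
    (hab : a + b - 1 + (n:ℂ) ≠ 0) (hn1 : (1:ℂ) + (n:ℂ) ≠ 0)
    (h1 : Complex.Gamma (1 + (n:ℂ)) ≠ 0) (h2 : Complex.Gamma (a + b - 1 + (n:ℂ)) ≠ 0) :
    (a + n) * (b + n) * ff a b n = (1 + n) * (a + b - 1 + n) * ff a b (n + 1) := by
  have e1 : Complex.Gamma (a + ((n:ℕ)+1:ℕ)) = (a + n) * Complex.Gamma (a + n) := by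
    push_cast
    rw [show a + ((n:ℂ)+1) = (a + n) + 1 by ring, Complex.Gamma_add_one _ ha]
  have e2 : Complex.Gamma (b + ((n:ℕ)+1:ℕ)) = (b + n) * Complex.Gamma (b + n) := by
    push_cast
    rw [show b + ((n:ℂ)+1) = (b + n) + 1 by ring, Complex.Gamma_add_one _ hb]
  have e3 : Complex.Gamma (1 + ((n:ℕ)+1:ℕ)) = (1 + n) * Complex.Gamma (1 + n) := by
    push_cast
    rw [show (1:ℂ) + ((n:ℂ)+1) = (1 + n) + 1 by ring, Complex.Gamma_add_one _ hn1]
  have e4 : Complex.Gamma (a + b - 1 + ((n:ℕ)+1:ℕ))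
      = (a + b - 1 + n) * Complex.Gamma (a + b - 1 + n) := by
    push_cast
    rw [show a + b - 1 + ((n:ℂ)+1) = (a + b - 1 + n) + 1 by ring, Complex.Gamma_add_one _ hab]
  rw [ff, ff, e1, e2, e3, e4]
  field_simp

lemma norm_add_cast_lb (x : ℂ) (n j : ℕ) : (n:ℝ) - ‖x‖ ≤ ‖x + n + j‖ := by
  have h0 := norm_sub_norm_le ((n:ℂ) + j) (-x)
  simp only [sub_neg_eq_add, norm_neg] at h0
  have e : ((n:ℂ) + j) + x = x + n + j := by ring
  rw [e] at h0
  have e2 : ‖(n:ℂ) + j‖ = (n:ℝ) + j := by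
    rw [show ((n:ℂ) + j) = (((n + j : ℕ)):ℂ) by push_cast; ring, Complex.norm_natCast]
    push_cast; ring
  rw [e2] at h0
  have : (0:ℝ) ≤ j := Nat.cast_nonneg j
  linarith

lemma add_cast_ne (x : ℂ) (n j : ℕ) (h : ‖x‖ < n) : x + n + j ≠ 0 := by
  intro hc
  have := norm_add_cast_lb x n j
  rw [hc, norm_zero] at this
  linarith

lemma gamma_shift (w : ℂ) (k : ℕ) (hw : ∀ j : ℕ, j < k → w + j ≠ 0) :
    Complex.Gamma (w + k) = Complex.Gamma w * ∏ j ∈ Finset.range k, (w + j) := by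
  induction k with
  | zero => simp
  | succ m ih =>
    have e : w + ((m:ℕ)+1:ℕ) = (w + m) + 1 := by push_cast; ring
    rw [e, Complex.Gamma_add_one _ (hw m (by omega)), ih (fun j hj => hw j (by omega)),
      Finset.prod_range_succ]
    ring

lemma gamma_prod (z : ℂ) (hz : 0 < z.re) (n : ℕ) :
    Complex.Gamma (z + n + 1) = Complex.Gamma z * ∏ j ∈ Finset.range (n + 1), (z + j) := by
  induction n with
  | zero =>
    have hz0 : z ≠ 0 := by intro h; rw [h] at hz; simp at hz
    simp [Complex.Gamma_add_one _ hz0]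
    ring
  | succ k ih =>
    have hzk : z + (k:ℂ) + 1 ≠ 0 := by
      intro hc
      have : (z + (k:ℂ) + 1).re = 0 := by rw [hc]; simp
      simp only [Complex.add_re, Complex.natCast_re, Complex.one_re] at this
      have : (0:ℝ) ≤ (k:ℝ) := Nat.cast_nonneg k
      linarith
    have e : z + ((k:ℕ)+1:ℕ) + 1 = (z + k + 1) + 1 := by push_cast; ring
    rw [e, Complex.Gamma_add_one _ hzk, ih,
      Finset.prod_range_succ (fun j => (z + (j:ℂ))) (k+1)]
    push_cast
    ring

lemma tendsto_aux1 (z : ℂ) (hz : 0 < z.re) :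
    Tendsto (fun n : ℕ => Complex.Gamma (z + n + 1) / ((n:ℂ) ^ z * n.factorial))
      atTop (𝓝 1) := by
  have hG : Complex.Gamma z ≠ 0 := Complex.Gamma_ne_zero_of_re_pos hz
  have heq : (fun n : ℕ => Complex.Gamma (z + n + 1) / ((n:ℂ) ^ z * n.factorial))
      = fun n => Complex.Gamma z / Complex.GammaSeq z n := by
    funext n
    rw [Complex.GammaSeq, div_div_eq_mul_div, gamma_prod z hz n]
  rw [heq]
  have h := Filter.Tendsto.div (tendsto_const_nhds (x := Complex.Gamma z))
    (Complex.GammaSeq_tendsto_Gamma z) hG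
  rw [div_self hG] at h
  exact h

lemma tendsto_cast_inv : Tendsto (fun n : ℕ => ((n:ℂ))⁻¹) atTop (𝓝 0) := by
  have h := tendsto_inv_atTop_nhds_zero_nat (𝕜 := ℝ)
  have := (Complex.continuous_ofReal.tendsto 0).comp h
  refine this.congr fun n => ?_
  simp [Function.comp, Complex.ofReal_inv]

lemma tendsto_ratio (c : ℂ) : Tendsto (fun n : ℕ => (n:ℂ) / ((n:ℂ) + c)) atTop (𝓝 1) := by
  have hg : Tendsto (fun n : ℕ => ((n:ℂ) + c) / (n:ℂ)) atTop (𝓝 1) := by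
    have h0 : Tendsto (fun n : ℕ => c * ((n:ℂ))⁻¹ + 1) atTop (𝓝 1) := by
      have := (tendsto_const_nhds (x := c)).mul tendsto_cast_inv
      simpa using this.add (tendsto_const_nhds (x := (1:ℂ)))
    refine h0.congr' ?_
    filter_upwards [eventually_ge_atTop 1] with n hn
    have hn0 : (n:ℂ) ≠ 0 := Nat.cast_ne_zero.mpr (by omega)
    field_simp
    ring
  have := hg.inv₀ one_ne_zero
  simp only [inv_one] at this
  refine this.congr fun n => ?_
  rw [inv_div]

lemma tendsto_phi (x : ℂ) :
    Tendsto (fun n : ℕ => Complex.Gamma (x + n) / ((n:ℂ) ^ (x - 1) * n.factorial))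
      atTop (𝓝 1) := by
  obtain ⟨k, hk⟩ := exists_nat_gt (1 - x.re)
  have hz : 0 < (x + k - 1).re := by
    simp only [Complex.sub_re, Complex.add_re, Complex.natCast_re, Complex.one_re]
    linarith
  have h1 := tendsto_aux1 (x + k - 1) hz
  have h2 : Tendsto (fun n : ℕ => ∏ j ∈ Finset.range k, ((n:ℂ) / (x + n + j)))
      atTop (𝓝 1) := by
    have h3 : Tendsto (fun n : ℕ => ∏ j ∈ Finset.range k, ((n:ℂ) / (x + n + j)))
        atTop (𝓝 (∏ _j ∈ Finset.range k, (1:ℂ))) := by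
      refine tendsto_finset_prod _ fun j _ => ?_
      have := tendsto_ratio (x + j)
      refine this.congr fun n => ?_
      ring_nf
    simpa using h3
  have h4 := h1.mul h2
  rw [mul_one] at h4
  refine Tendsto.congr' ?_ h4
  obtain ⟨N, hN⟩ := exists_nat_gt (‖x‖ + 1)
  filter_upwards [eventually_ge_atTop (N + 1)] with n hn
  have hxn : ‖x‖ < (n:ℝ) := by
    have h5 : (N:ℝ) ≤ (n:ℝ) := by exact_mod_cast Nat.le_of_succ_le hn
    linarith
  have hn0 : (n:ℂ) ≠ 0 := Nat.cast_ne_zero.mpr (by omega)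
  have hP : ∀ j ∈ Finset.range k, x + (n:ℂ) + (j:ℂ) ≠ 0 := fun j _ => add_cast_ne x n j hxn
  have egam : Complex.Gamma (x + k - 1 + n + 1)
      = Complex.Gamma (x + n) * ∏ j ∈ Finset.range k, (x + n + j) := by
    rw [show x + (k:ℂ) - 1 + n + 1 = (x + n) + k by ring]
    exact gamma_shift (x + n) k fun j hj => add_cast_ne x n j hxn
  have epow : (n:ℂ) ^ (x + (k:ℂ) - 1) = (n:ℂ) ^ (x - 1) * (n:ℂ) ^ k := by
    rw [show x + (k:ℂ) - 1 = (x - 1) + k by ring, Complex.cpow_add _ _ hn0,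
      Complex.cpow_natCast]
  have eprod : ∏ j ∈ Finset.range k, ((n:ℂ) / (x + n + j))
      = (n:ℂ) ^ k / ∏ j ∈ Finset.range k, (x + n + j) := by
    rw [Finset.prod_div_distrib, Finset.prod_const, Finset.card_range]
  rw [egam, epow, eprod]
  have hPP : (∏ j ∈ Finset.range k, (x + (n:ℂ) + j)) ≠ 0 := Finset.prod_ne_zero_iff.mpr hP
  have hpow : (n:ℂ) ^ (x - 1) ≠ 0 := by
    simp [Complex.cpow_eq_zero_iff, hn0]
  have hnk : (n:ℂ) ^ k ≠ 0 := pow_ne_zero _ hn0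
  have hfac : ((n.factorial : ℂ)) ≠ 0 := Nat.cast_ne_zero.mpr (Nat.factorial_ne_zero _)
  field_simp

lemma re_add_pos (x : ℂ) (n : ℕ) (h : ‖x‖ < n) : 0 < (x + n).re := by
  have h1 : |x.re| ≤ ‖x‖ := by
    exact Complex.abs_re_le_norm x
  have h2 : -‖x‖ ≤ x.re := by
    have := neg_abs_le x.re; linarith
  simp only [Complex.add_re, Complex.natCast_re]
  linarith

lemma gamma_add_nat_ne_zero (x : ℂ) (n : ℕ) (h : ‖x‖ < n) :
    Complex.Gamma (x + n) ≠ 0 :=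
  Complex.Gamma_ne_zero_of_re_pos (re_add_pos x n h)

lemma tendsto_ff (a b : ℂ) : Tendsto (ff a b) atTop (𝓝 1) := by
  have h1 := tendsto_phi a
  have h2 := tendsto_phi b
  have h3 := tendsto_phi (a + b - 1)
  have key := (h1.mul h2).div h3 one_ne_zero
  rw [mul_one, div_one] at key
  refine Tendsto.congr' ?_ key
  obtain ⟨N, hN⟩ := exists_nat_gt (‖a + b - 1‖ + 1)
  filter_upwards [eventually_ge_atTop (N + 1)] with n hn
  have hxn : ‖a + b - 1‖ < (n:ℝ) := by
    have h5 : (N:ℝ) ≤ (n:ℝ) := by exact_mod_cast Nat.le_of_succ_le hn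
    linarith
  have hn0 : (n:ℂ) ≠ 0 := Nat.cast_ne_zero.mpr (by omega)
  have hfac : ((n.factorial : ℂ)) ≠ 0 := Nat.cast_ne_zero.mpr (Nat.factorial_ne_zero _)
  have hGc : Complex.Gamma (a + b - 1 + n) ≠ 0 := gamma_add_nat_ne_zero _ n hxn
  have hpa : (n:ℂ) ^ (a - 1) ≠ 0 := by simp [Complex.cpow_eq_zero_iff, hn0]
  have hpb : (n:ℂ) ^ (b - 1) ≠ 0 := by simp [Complex.cpow_eq_zero_iff, hn0]
  have hpc : (n:ℂ) ^ (a + b - 1 - 1) ≠ 0 := by simp [Complex.cpow_eq_zero_iff, hn0]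
  have hg1 : Complex.Gamma (1 + (n:ℂ)) = (n.factorial : ℂ) := by
    rw [add_comm]; exact_mod_cast Complex.Gamma_nat_eq_factorial n
  have epow : (n:ℂ) ^ (a - 1) * (n:ℂ) ^ (b - 1) = (n:ℂ) ^ (a + b - 1 - 1) := by
    rw [← Complex.cpow_add _ _ hn0]
    congr 1
    ring
  simp only [Pi.div_apply]
  rw [ff, hg1, ← epow]
  field_simp

lemma norm_add_cast_lb0 (x : ℂ) (n : ℕ) : (n:ℝ) - ‖x‖ ≤ ‖x + n‖ := by
  have := norm_add_cast_lb x n 0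
  simpa using this

lemma add_cast_ne0 (x : ℂ) (n : ℕ) (h : ‖x‖ < n) : x + n ≠ 0 := by
  intro hc
  have := norm_add_cast_lb0 x n
  rw [hc, norm_zero] at this
  linarith

lemma sub_cast_ne (x : ℂ) (n j : ℕ) (h : ‖x‖ + j < n) : x - n + j ≠ 0 := by
  intro hc
  have hx : x + j = (n:ℂ) := by linear_combination hc
  have h1 : ‖x + (j:ℂ)‖ = (n:ℝ) := by rw [hx, Complex.norm_natCast]
  have h2 : ‖x + (j:ℂ)‖ ≤ ‖x‖ + j := by
    calc ‖x + (j:ℂ)‖ ≤ ‖x‖ + ‖(j:ℂ)‖ := norm_add_le _ _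
    _ = ‖x‖ + j := by rw [Complex.norm_natCast]
  linarith

lemma poch_lower (x : ℂ) (m n : ℕ) (hn : 2*(‖x‖ + m) ≤ (n:ℝ)) :
    ((n:ℝ)/2)^m ≤ ‖poch (x - n) m‖ := by
  induction m with
  | zero => simp [poch_zero]
  | succ k ih =>
    have hkk : (k:ℝ) ≤ ((k+1:ℕ):ℝ) := by push_cast; linarith
    have h1 : ((n:ℝ)/2)^k ≤ ‖poch (x - n) k‖ := by
      refine ih ?_
      push_cast at hn ⊢
      linarith
    have h2 : (n:ℝ)/2 ≤ ‖x - ↑n + ↑k‖ := by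
      have h3 := norm_sub_norm_le ((n:ℂ)) (x + k)
      have e : (n:ℂ) - (x + k) = -(x - n + k) := by ring
      rw [e, norm_neg, Complex.norm_natCast] at h3
      have h4 : ‖x + (k:ℂ)‖ ≤ ‖x‖ + k := by
        calc ‖x + (k:ℂ)‖ ≤ ‖x‖ + ‖(k:ℂ)‖ := norm_add_le _ _
        _ = ‖x‖ + k := by rw [Complex.norm_natCast]
      push_cast at hn
      linarith
    rw [poch_succ, norm_mul]
    have hpos : (0:ℝ) ≤ (n:ℝ)/2 := by positivity
    calc ((n:ℝ)/2)^(k+1) = ((n:ℝ)/2)^k * ((n:ℝ)/2) := by ring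
    _ ≤ ‖poch (x-↑n) k‖ * ‖x - ↑n + ↑k‖ :=
        mul_le_mul h1 h2 hpos (le_trans (pow_nonneg hpos k) h1)

lemma tendsto_tt (a b : ℂ) (m : ℕ) (hm : 1 ≤ m) :
    Tendsto (fun n : ℕ => tt a b ↑n m) atTop (𝓝 0) := by
  set C : ℝ := 2 * (‖poch (1-a) m‖ * ‖poch (1-b) m‖) with hC
  refine squeeze_zero_norm' ?_ (tendsto_const_div_atTop_nhds_zero_nat C)
  obtain ⟨N, hN⟩ := exists_nat_ge (2*(‖2-a-b‖ + m) + 2)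
  filter_upwards [eventually_ge_atTop N] with n hn
  have hnR : 2*(‖2-a-b‖ + m) + 2 ≤ (n:ℝ) := le_trans hN (by exact_mod_cast hn)
  have hn2 : (2:ℝ) ≤ (n:ℝ) := by
    have : (0:ℝ) ≤ ‖2-a-b‖ + m := by positivity
    linarith
  have hP : ((n:ℝ)/2)^m ≤ ‖poch (2-a-b-↑n) m‖ := poch_lower (2-a-b) m n (by linarith)
  have hP2 : (n:ℝ)/2 ≤ ((n:ℝ)/2)^m := by
    calc (n:ℝ)/2 = ((n:ℝ)/2)^1 := by ring
    _ ≤ ((n:ℝ)/2)^m := pow_le_pow_right₀ (by linarith) hm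
  have hPpos : (0:ℝ) < ‖poch (2-a-b-↑n) m‖ := by
    have : (0:ℝ) < (n:ℝ)/2 := by linarith
    linarith
  have hfac : (1:ℝ) ≤ (m.factorial : ℝ) := by exact_mod_cast Nat.one_le_iff_ne_zero.mpr (Nat.factorial_ne_zero m)
  have hnorm : ‖tt a b ↑n m‖
      = (‖poch (1-a) m‖ * ‖poch (1-b) m‖) / ((m.factorial:ℝ) * ‖poch (2-a-b-↑n) m‖) := by
    rw [tt, norm_div, norm_mul, norm_mul, Complex.norm_natCast]
  rw [hnorm]
  have hstep1 : (‖poch (1-a) m‖ * ‖poch (1-b) m‖) / ((m.factorial:ℝ) * ‖poch (2-a-b-↑n) m‖)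
      ≤ (‖poch (1-a) m‖ * ‖poch (1-b) m‖) / ((n:ℝ)/2) := by
    refine div_le_div_of_nonneg_left (by positivity) (by linarith) ?_
    calc (n:ℝ)/2 ≤ ((n:ℝ)/2)^m := hP2
    _ ≤ ‖poch (2-a-b-↑n) m‖ := hP
    _ = 1 * ‖poch (2-a-b-↑n) m‖ := by ring
    _ ≤ (m.factorial:ℝ) * ‖poch (2-a-b-↑n) m‖ := by
        exact mul_le_mul_of_nonneg_right hfac (by linarith)
  refine le_trans hstep1 (le_of_eq ?_)
  rw [hC]
  field_simp

lemma tt_zero (a b x : ℂ) : tt a b x 0 = 1 := by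
  simp [tt, poch_zero]

lemma tendsto_gg (a b : ℂ) (M : ℕ) :
    Tendsto (fun n : ℕ => gg a b M ↑n) atTop (𝓝 1) := by
  have h : Tendsto (fun n : ℕ => ∑ m ∈ Finset.range (M+1), tt a b ↑n m) atTop
      (𝓝 (∑ m ∈ Finset.range (M+1), if m = 0 then (1:ℂ) else 0)) := by
    refine tendsto_finset_sum _ fun m _ => ?_
    cases m with
    | zero =>
      simp only [if_pos rfl]
      exact tendsto_const_nhds.congr fun n => (tt_zero a b ↑n).symm
    | succ k =>
      simp only [if_neg (Nat.succ_ne_zero k)]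
      exact tendsto_tt a b (k+1) (by omega)
  have e : (∑ m ∈ Finset.range (M+1), if m = 0 then (1:ℂ) else 0) = 1 := by
    rw [Finset.sum_ite_eq' (Finset.range (M+1)) 0 (fun _ => (1:ℂ))]
    simp
  rw [e] at h
  exact h

lemma sum_inv_sq (n : ℕ) (hn : 1 ≤ n) (K : ℕ) :
    ∑ k ∈ Finset.range K, (1:ℝ)/(((n:ℝ)+k)^2) ≤ 2/(n:ℝ) - 2/((n:ℝ)+K) := by
  have hn1 : (1:ℝ) ≤ (n:ℝ) := by exact_mod_cast hn
  induction K with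
  | zero => simp
  | succ L ih =>
    rw [Finset.sum_range_succ]
    have hpos : (0:ℝ) < (n:ℝ)+L := by
      have : (0:ℝ) ≤ (L:ℝ) := Nat.cast_nonneg L
      linarith
    have hpos2 : (0:ℝ) < (n:ℝ)+L+1 := by linarith
    have h1 : (1:ℝ)/(((n:ℝ)+L)^2) ≤ 2/((n:ℝ)+L) - 2/((n:ℝ)+L+1) := by
      rw [div_sub_div _ _ (ne_of_gt hpos) (ne_of_gt hpos2)]
      rw [div_le_div_iff₀ (by positivity) (by positivity)]
      nlinarith
    have e : ((L+1:ℕ):ℝ) = (L:ℝ)+1 := by push_cast; ring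
    rw [e, ← add_assoc]
    linarith [ih]

noncomputable def EE (a b : ℂ) (M : ℕ) (n : ℕ) : ℂ := ff a b n - gg a b M ↑n
noncomputable def qq (a b : ℂ) (M : ℕ) (n : ℕ) : ℂ := EE a b M n / ff a b n
noncomputable def dd (a b : ℂ) (M : ℕ) (n : ℕ) : ℂ :=
  -(ww a b ↑n (M+1)) / ((a+↑n)*(b+↑n) * ff a b n)

lemma qq_step (a b : ℂ) (M n : ℕ)
    (hf : ff a b n ≠ 0) (hf1 : ff a b (n+1) ≠ 0)
    (ha : a + (n:ℂ) ≠ 0) (hb : b + (n:ℂ) ≠ 0) (hab : a + b - 1 + (n:ℂ) ≠ 0)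
    (hn1 : (1:ℂ) + (n:ℂ) ≠ 0)
    (hG1 : Complex.Gamma (1 + (n:ℂ)) ≠ 0) (hG2 : Complex.Gamma (a + b - 1 + (n:ℂ)) ≠ 0)
    (h0 : 1 - a - b - (n:ℂ) ≠ 0)
    (hj : ∀ j : ℕ, j < M + 1 → 2 - a - b - (n:ℂ) + (j:ℂ) ≠ 0) :
    qq a b M n = qq a b M (n+1) + dd a b M n := by
  have R1 := ff_rec a b n ha hb hab hn1 hG1 hG2
  have R2 := step_sum a b ↑n M h0 hj
  have ecast : ((n+1:ℕ):ℂ) = (↑n:ℂ)+1 := by push_cast; ring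
  rw [qq, qq, EE, EE, dd, ecast]
  field_simp
  linear_combination gg a b M ((n:ℂ)+1) * R1 - ff a b (n+1) * R2

lemma gg_eq (a b : ℂ) (M : ℕ) (x : ℂ) :
    gg a b M x = 1 + ∑ m ∈ Finset.Icc 1 M,
      poch (1 - a) m * poch (1 - b) m / ((m.factorial : ℂ) * poch (2 - a - b - x) m) := by
  rw [gg, Finset.sum_range_succ', tt_zero, ← Finset.Ico_add_one_right_eq_Icc,
    Finset.sum_Ico_eq_sum_range]
  rw [add_comm]
  congr 1
  refine Finset.sum_congr rfl fun i _ => ?_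
  rw [tt, add_comm 1 i]

theorem dingle_paris_olver (a b : ℂ) (M : ℕ) :
    (fun n : ℕ => Complex.Gamma (a + n) * Complex.Gamma (b + n) /
        (Complex.Gamma (1 + n) * Complex.Gamma (a + b - 1 + n)) -
      (1 + ∑ m ∈ Finset.Icc 1 M,
        poch (1 - a) m * poch (1 - b) m /
          ((m.factorial : ℂ) * poch (2 - a - b - n) m))) =O[atTop]
      fun n : ℕ => (n : ℝ) ^ (-(M : ℤ) - 1) := by
  have hfun : (fun n : ℕ => Complex.Gamma (a + n) * Complex.Gamma (b + n) /
        (Complex.Gamma (1 + n) * Complex.Gamma (a + b - 1 + n)) -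
      (1 + ∑ m ∈ Finset.Icc 1 M,
        poch (1 - a) m * poch (1 - b) m /
          ((m.factorial : ℂ) * poch (2 - a - b - n) m)))
      = fun n : ℕ => EE a b M n := by
    funext n
    rw [EE, ff, gg_eq]
  rw [hfun]
  set C1 : ℝ := ((M:ℝ)+1) * ‖poch (1-a) (M+1)‖ * ‖poch (1-b) (M+1)‖ * 2^(M+3) with hC1
  have hC1nn : 0 ≤ C1 := by positivity
  obtain ⟨N₁, hN₁⟩ := Metric.tendsto_atTop.mp (tendsto_ff a b) (1/2) (by norm_num)
  obtain ⟨N₂, hN₂⟩ := exists_nat_ge (2*(‖a‖ + ‖b‖ + ‖2-a-b‖ + (M:ℝ) + 5))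
  set N : ℕ := max (max N₁ N₂) 2 with hNdef
  have hRn : ∀ n : ℕ, N ≤ n → 2*(‖a‖ + ‖b‖ + ‖2-a-b‖ + (M:ℝ) + 5) ≤ (n:ℝ) := by
    intro n hn
    refine le_trans hN₂ ?_
    exact_mod_cast le_trans (le_trans (le_max_right N₁ N₂) (le_max_left _ 2)) hn
  have hffclose : ∀ n : ℕ, N ≤ n → ‖ff a b n - 1‖ < 1/2 := by
    intro n hn
    have := hN₁ n (le_trans (le_trans (le_max_left N₁ N₂) (le_max_left _ 2)) hn)
    rwa [dist_eq_norm] at this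
  have hffub : ∀ n : ℕ, N ≤ n → ‖ff a b n‖ ≤ 3/2 := by
    intro n hn
    have h := hffclose n hn
    calc ‖ff a b n‖ = ‖(ff a b n - 1) + 1‖ := by ring_nf
    _ ≤ ‖ff a b n - 1‖ + ‖(1:ℂ)‖ := norm_add_le _ _
    _ ≤ 3/2 := by simp only [norm_one]; linarith
  have hfflb : ∀ n : ℕ, N ≤ n → 1/2 ≤ ‖ff a b n‖ := by
    intro n hn
    have h := hffclose n hn
    have h2 : ‖ff a b n - (ff a b n - 1)‖ ≤ ‖ff a b n‖ + ‖ff a b n - 1‖ := norm_sub_le _ _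
    simp only [sub_sub_cancel, norm_one] at h2
    linarith
  have hffne : ∀ n : ℕ, N ≤ n → ff a b n ≠ 0 := by
    intro n hn hc
    have := hfflb n hn
    rw [hc, norm_zero] at this
    norm_num at this
  have hna : ∀ n : ℕ, N ≤ n → 2*‖a‖ ≤ (n:ℝ) ∧ 2*‖b‖ ≤ (n:ℝ) ∧ ‖a+b-1‖ < (n:ℝ) ∧
      2*(‖2-a-b‖+(M:ℝ)) ≤ (n:ℝ) ∧ ‖1-a-b‖ + (M:ℝ) + 1 < (n:ℝ) ∧ (2:ℝ) ≤ (n:ℝ) := by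
    intro n hn
    have hR := hRn n hn
    have h1 : (0:ℝ) ≤ ‖a‖ := norm_nonneg _
    have h2 : (0:ℝ) ≤ ‖b‖ := norm_nonneg _
    have h3 : (0:ℝ) ≤ ‖2-a-b‖ := norm_nonneg _
    have h4 : (0:ℝ) ≤ (M:ℝ) := Nat.cast_nonneg _
    have h5 : ‖a+b-1‖ ≤ ‖a‖ + ‖b‖ + 1 := by
      calc ‖a+b-1‖ ≤ ‖a+b‖ + ‖(1:ℂ)‖ := norm_sub_le _ _
      _ ≤ ‖a‖ + ‖b‖ + 1 := by
          have := norm_add_le a b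
          simp only [norm_one]
          linarith
    have h6 : ‖1-a-b‖ ≤ ‖2-a-b‖ + 1 := by
      calc ‖1-a-b‖ = ‖(2-a-b) - 1‖ := by ring_nf
      _ ≤ ‖2-a-b‖ + ‖(1:ℂ)‖ := norm_sub_le _ _
      _ = ‖2-a-b‖ + 1 := by rw [norm_one]
    refine ⟨by linarith, by linarith, by linarith, by linarith, by linarith, by linarith⟩
  have hstep : ∀ n : ℕ, N ≤ n → qq a b M n = qq a b M (n+1) + dd a b M n := by
    intro n hn
    obtain ⟨ha2, hb2, hab2, h2ab, h1ab, hn2⟩ := hna n hn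
    have hn' : N ≤ n + 1 := by omega
    refine qq_step a b M n (hffne n hn) (hffne (n+1) hn')
      (add_cast_ne0 a n (by linarith)) (add_cast_ne0 b n (by linarith))
      (add_cast_ne0 (a+b-1) n hab2) ?_ ?_ ?_ ?_ ?_
    · intro hc
      have h7 : ((1+n:ℕ):ℂ) = 0 := by push_cast; linear_combination hc
      exact (Nat.cast_ne_zero.mpr (by omega : 1+n ≠ 0)) h7
    · refine Complex.Gamma_ne_zero_of_re_pos ?_
      simp only [Complex.add_re, Complex.one_re, Complex.natCast_re]
      positivity
    · exact gamma_add_nat_ne_zero (a+b-1) n hab2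
    · have := sub_cast_ne (1-a-b) n 0 (by
        simp only [Nat.cast_zero]
        linarith)
      simpa using this
    · intro j hjM
      refine sub_cast_ne (2-a-b) n j ?_
      have hjR : (j:ℝ) ≤ (M:ℝ) := by exact_mod_cast Nat.lt_succ_iff.mp hjM
      have h6 : ‖2-a-b‖ ≤ ‖1-a-b‖ + 1 := by
        calc ‖2-a-b‖ = ‖(1-a-b) + 1‖ := by ring_nf
        _ ≤ ‖1-a-b‖ + ‖(1:ℂ)‖ := norm_add_le _ _
        _ = ‖1-a-b‖ + 1 := by rw [norm_one]
      linarith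
  -- telescoping
  have htele : ∀ n : ℕ, N ≤ n → ∀ K : ℕ,
      qq a b M n = qq a b M (n+K) + ∑ k ∈ Finset.range K, dd a b M (n+k) := by
    intro n hn K
    induction K with
    | zero => simp
    | succ L ih =>
      rw [Finset.sum_range_succ, ih, hstep (n+L) (by omega),
        show n+(L+1) = n+L+1 by omega]
      ring
  -- bound on dd
  have hdd : ∀ m : ℕ, N ≤ m → ‖dd a b M m‖ ≤ C1 / (m:ℝ)^(M+2) := by
    intro m hm
    obtain ⟨ha2, hb2, hab2, h2ab, h1ab, hm2⟩ := hna m hm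
    have hP : ((m:ℝ)/2)^M ≤ ‖poch (2-a-b-↑m) M‖ := poch_lower (2-a-b) M m h2ab
    have hAm : (m:ℝ)/2 ≤ ‖a+↑m‖ := by
      have := norm_add_cast_lb0 a m
      linarith
    have hBm : (m:ℝ)/2 ≤ ‖b+↑m‖ := by
      have := norm_add_cast_lb0 b m
      linarith
    have hffm := hfflb m hm
    have hfacM : (1:ℝ) ≤ ((M+1).factorial : ℝ) := by
      exact_mod_cast Nat.one_le_iff_ne_zero.mpr (Nat.factorial_ne_zero (M+1))
    have hnormdd : ‖dd a b M m‖ = (((M+1:ℕ):ℝ) * ‖poch (1-a) (M+1)‖ * ‖poch (1-b) (M+1)‖)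
        / ((((M+1).factorial : ℝ) * ‖poch (2-a-b-↑m) M‖)
            * (‖a+↑m‖ * ‖b+↑m‖ * ‖ff a b m‖)) := by
      rw [dd, ww, Nat.add_sub_cancel, norm_div, norm_neg, norm_div, norm_mul, norm_mul,
        norm_mul, norm_mul, Complex.norm_natCast, Complex.norm_natCast, div_div,
        norm_mul (a+(m:ℂ)) (b+(m:ℂ))]
    rw [hnormdd]
    have hden : (m:ℝ)^(M+2)/2^(M+3)
        ≤ (((M+1).factorial : ℝ) * ‖poch (2-a-b-↑m) M‖)
            * (‖a+↑m‖ * ‖b+↑m‖ * ‖ff a b m‖) := by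
      have e : (m:ℝ)^(M+2)/2^(M+3)
          = (1 * ((m:ℝ)/2)^M) * (((m:ℝ)/2) * ((m:ℝ)/2) * (1/2)) := by
        rw [div_pow]
        ring
      rw [e]
      gcongr
    calc (((M+1:ℕ):ℝ) * ‖poch (1-a) (M+1)‖ * ‖poch (1-b) (M+1)‖)
        / ((((M+1).factorial : ℝ) * ‖poch (2-a-b-↑m) M‖)
            * (‖a+↑m‖ * ‖b+↑m‖ * ‖ff a b m‖))
        ≤ (((M+1:ℕ):ℝ) * ‖poch (1-a) (M+1)‖ * ‖poch (1-b) (M+1)‖)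
            / ((m:ℝ)^(M+2)/2^(M+3)) := by
          refine div_le_div_of_nonneg_left (by positivity) (by positivity) hden
    _ = C1 / (m:ℝ)^(M+2) := by
        rw [hC1, div_div_eq_mul_div]
        congr 1
        push_cast
        ring
  -- sum bound
  have hSum : ∀ n : ℕ, N ≤ n → ∀ K : ℕ,
      ∑ k ∈ Finset.range K, ‖dd a b M (n+k)‖ ≤ 2*C1/(n:ℝ)^(M+1) := by
    intro n hn K
    obtain ⟨_, _, _, _, _, hn2⟩ := hna n hn
    have hn1 : (1:ℝ) ≤ (n:ℝ) := by linarith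
    have hnpos : (0:ℝ) < (n:ℝ) := by linarith
    calc ∑ k ∈ Finset.range K, ‖dd a b M (n+k)‖
        ≤ ∑ k ∈ Finset.range K, (C1/(n:ℝ)^M) * (1/(((n:ℝ)+k)^2)) := by
          refine Finset.sum_le_sum fun k _ => ?_
          have h1 := hdd (n+k) (by omega)
          have e : ((n+k:ℕ):ℝ) = (n:ℝ)+k := by push_cast; ring
          rw [e] at h1
          refine le_trans h1 ?_
          have hkpos : (0:ℝ) ≤ (k:ℝ) := Nat.cast_nonneg _
          have h2 : (n:ℝ)^M * ((n:ℝ)+k)^2 ≤ ((n:ℝ)+k)^(M+2) := by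
            rw [pow_add]
            have h3 : (n:ℝ)^M ≤ ((n:ℝ)+k)^M := by
              refine pow_le_pow_left₀ (by linarith) (by linarith) M
            nlinarith [pow_nonneg (by linarith : (0:ℝ) ≤ (n:ℝ)+k) M,
              sq_nonneg ((n:ℝ)+k), pow_nonneg (by linarith : (0:ℝ) ≤ (n:ℝ)) M]
          calc C1/((n:ℝ)+k)^(M+2) ≤ C1/((n:ℝ)^M * ((n:ℝ)+k)^2) := by
                refine div_le_div_of_nonneg_left hC1nn (by positivity) h2
          _ = (C1/(n:ℝ)^M) * (1/(((n:ℝ)+k)^2)) := by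
                field_simp
    _ = (C1/(n:ℝ)^M) * ∑ k ∈ Finset.range K, (1:ℝ)/(((n:ℝ)+k)^2) := by
          rw [Finset.mul_sum]
    _ ≤ (C1/(n:ℝ)^M) * (2/(n:ℝ)) := by
          refine mul_le_mul_of_nonneg_left ?_ (by positivity)
          have := sum_inv_sq n (by omega) K
          have hK : (0:ℝ) ≤ 2/((n:ℝ)+K) := by positivity
          linarith
    _ = 2*C1/(n:ℝ)^(M+1) := by
          rw [pow_succ]
          field_simp
  -- limit of qq
  have hqq0 : Tendsto (fun m : ℕ => qq a b M m) atTop (𝓝 0) := by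
    have hE : Tendsto (fun m : ℕ => EE a b M m) atTop (𝓝 0) := by
      have := (tendsto_ff a b).sub (tendsto_gg a b M)
      simpa [EE] using this
    have := hE.div (tendsto_ff a b) one_ne_zero
    rw [zero_div] at this
    exact this
  -- final bound
  refine isBigO_iff.mpr ⟨3*C1, ?_⟩
  filter_upwards [eventually_ge_atTop N] with n hn
  obtain ⟨_, _, _, _, _, hn2⟩ := hna n hn
  have hnpos : (0:ℝ) < (n:ℝ) := by linarith
  have hqbound : ‖qq a b M n‖ ≤ 2*C1/(n:ℝ)^(M+1) := by
    have hlim : Tendsto (fun K : ℕ => ‖qq a b M (n+K)‖ + 2*C1/(n:ℝ)^(M+1)) atTop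
        (𝓝 (0 + 2*C1/(n:ℝ)^(M+1))) := by
      refine Tendsto.add_const _ ?_
      have hcomp : Tendsto (fun K : ℕ => n + K) atTop atTop := by
        refine tendsto_atTop_atTop.mpr fun c => ⟨c, fun x hx => by omega⟩
      have := (hqq0.comp hcomp).norm
      simpa using this
    have hbd : ∀ K : ℕ, ‖qq a b M n‖ ≤ ‖qq a b M (n+K)‖ + 2*C1/(n:ℝ)^(M+1) := by
      intro K
      rw [htele n hn K]
      calc ‖qq a b M (n+K) + ∑ k ∈ Finset.range K, dd a b M (n+k)‖
          ≤ ‖qq a b M (n+K)‖ + ‖∑ k ∈ Finset.range K, dd a b M (n+k)‖ := norm_add_le _ _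
      _ ≤ ‖qq a b M (n+K)‖ + 2*C1/(n:ℝ)^(M+1) := by
          have h1 : ‖∑ k ∈ Finset.range K, dd a b M (n+k)‖
              ≤ ∑ k ∈ Finset.range K, ‖dd a b M (n+k)‖ := norm_sum_le _ _
          have h2 := hSum n hn K
          linarith
    have := ge_of_tendsto' hlim hbd
    linarith [this]
  have hE : EE a b M n = qq a b M n * ff a b n := by
    rw [qq, div_mul_cancel₀ _ (hffne n hn)]
  have hEbound : ‖EE a b M n‖ ≤ 3*C1/(n:ℝ)^(M+1) := by
    rw [hE, norm_mul]
    calc ‖qq a b M n‖ * ‖ff a b n‖ ≤ (2*C1/(n:ℝ)^(M+1)) * (3/2) := by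
          refine mul_le_mul hqbound (hffub n hn) (norm_nonneg _) (by positivity)
    _ = 3*C1/(n:ℝ)^(M+1) := by ring
  have hzpow : ((n:ℝ)) ^ (-(M:ℤ) - 1) = ((n:ℝ)^(M+1))⁻¹ := by
    rw [show -(M:ℤ)-1 = -((M+1:ℕ):ℤ) by push_cast; ring, zpow_neg, zpow_natCast]
  rw [hzpow, Real.norm_of_nonneg (by positivity : (0:ℝ) ≤ ((n:ℝ)^(M+1))⁻¹)]
  calc ‖EE a b M n‖ ≤ 3*C1/(n:ℝ)^(M+1) := hEbound
  _ = 3*C1 * ((n:ℝ)^(M+1))⁻¹ := by ring
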